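/- In the same setting, if α ∈ O (with no β ∈ O₃ satisfying α = β̃ or α = θ(β̃)) is not a stationary root, then there exists an integer j > 1 such that α = α^j = θ(α^{(j)}); that is, every non-stationary such root is cyclic. Conversely, if there exists j > 1 with α = α^j and α ≠ α^{j−1}, then α = θ(α^{(j)}) and α is not stationary. -/

import Mathlib

/-- The combinatorial setting of Section 4: disjoint Heisenberg sets `Γ_γ` (`γ ∈ S`)
inside `Δ(π')` satisfying conditions (C) and (C'), abstracted as follows.  `O` is the
union of the punctured Heisenberg sets, `θ` the pairing involution, `Sα α` the set
`S_α = {β ∈ O | α + β ∈ S and [x_α, x_β]~ ≠ 0}`, and `tilde` the map `α ↦ α̃` of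
condition (C').  `O_n = {α ∈ O | |S_α| = n}`. -/
structure ChainSetup (M : Type*) [AddCommGroup M] where
  S : Set M
  O : Set M
  Ofin : O.Finite
  θ : M → M
  tilde : M → M
  Sα : M → Set M
  θ_mem : ∀ α ∈ O, θ α ∈ O
  θ_invol : ∀ α ∈ O, θ (θ α) = α
  θ_ne : ∀ α ∈ O, θ α ≠ α
  sum_mem_S : ∀ α ∈ O, α + θ α ∈ S
  Sα_sub : ∀ α ∈ O, Sα α ⊆ O
  Sα_sum : ∀ α ∈ O, ∀ β ∈ Sα α, α + β ∈ S
  Sα_symm : ∀ α ∈ O, ∀ β ∈ Sα α, α ∈ Sα β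
  θ_in_Sα : ∀ α ∈ O, θ α ∈ Sα α
  /-- Condition (C'): every `α ∈ O` lies in `O₁ ⊔ O₂ ⊔ O₃`. -/
  card₁₂₃ : ∀ α ∈ O, 1 ≤ (Sα α).ncard ∧ (Sα α).ncard ≤ 3
  /-- Condition (C'): for `α ∈ O₃` there is `α̃ ∈ S_α ∩ O₂ \ {θ α}` with `θ(α̃) ∈ O₁`. -/
  tilde_spec : ∀ α ∈ O, (Sα α).ncard = 3 →
    tilde α ∈ Sα α ∧ tilde α ≠ θ α ∧ (Sα (tilde α)).ncard = 2 ∧ (Sα (θ (tilde α))).ncard = 1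
  /-- Notation 4.2: for `α ∈ O₂` one sets `α̃ = θ α`. -/
  tilde_eq : ∀ α ∈ O, (Sα α).ncard = 2 → tilde α = θ α

namespace ChainSetup

variable {M : Type*} [AddCommGroup M] (c : ChainSetup M)

/-- `a` is a sequence `(α^i)_{i ∈ ℕ}` constructed from the root `α` as in
Definition 4.4 (equivalently, `(α^{(i)})` is such a sequence constructed from `θ α`,
Definition 4.3): `a 0 = α`; if `θ(a n) ∈ O₁` then `a (n+1) = a n`; otherwise
`a (n+1) ∈ S_{θ(a n)} \ {a n, (θ(a n))~}`. -/
def IsSeq (α : M) (a : ℕ → M) : Prop :=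
  a 0 = α ∧ (∀ n, a n ∈ c.O) ∧ ∀ n,
    ((c.Sα (c.θ (a n))).ncard = 1 → a (n + 1) = a n) ∧
    (2 ≤ (c.Sα (c.θ (a n))).ncard →
      a (n + 1) ∈ c.Sα (c.θ (a n)) \ {a n, c.tilde (c.θ (a n))})

/-- A sequence is stationary if it is eventually constant from some rank on. -/
def Stationary (_c : ChainSetup M) (a : ℕ → M) : Prop := ∃ n, a (n + 1) = a n

/-- `α` is not of the form `β̃` or `θ(β̃)` for `β ∈ O₃`. -/
def NotTildeImage (α : M) : Prop :=
  ∀ β ∈ c.O, (c.Sα β).ncard = 3 → α ≠ c.tilde β ∧ α ≠ c.θ (c.tilde β)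


lemma fin_Sα {x : M} (hx : x ∈ c.O) : (c.Sα x).Finite :=
  c.Ofin.subset (c.Sα_sub x hx)

lemma theta_inj {x y : M} (hx : x ∈ c.O) (hy : y ∈ c.O) (h : c.θ x = c.θ y) : x = y := by
  rw [← c.θ_invol x hx, h, c.θ_invol y hy]

lemma two_le_ncard {x u v : M} (hx : x ∈ c.O) (hu : u ∈ c.Sα x) (hv : v ∈ c.Sα x)
    (huv : u ≠ v) : 2 ≤ (c.Sα x).ncard := by
  have := (Set.one_lt_ncard (c.fin_Sα hx)).2 ⟨u, hu, v, hv, huv⟩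
  omega

/-- uniqueness in the residual set `Sα z \ {θ z, tilde z}`. -/
lemma residual_unique {z w₁ w₂ : M} (hz : z ∈ c.O)
    (h1 : w₁ ∈ c.Sα z \ {c.θ z, c.tilde z}) (h2 : w₂ ∈ c.Sα z \ {c.θ z, c.tilde z}) :
    w₁ = w₂ := by
  have hfin := c.fin_Sα hz
  have hθ := c.θ_in_Sα z hz
  obtain ⟨hc1, hc3⟩ := c.card₁₂₃ z hz
  simp only [Set.mem_diff, Set.mem_insert_iff, Set.mem_singleton_iff, not_or] at h1 h2
  interval_cases h : (c.Sα z).ncard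
  · obtain ⟨b, hb⟩ := Set.ncard_eq_one.1 h
    exact absurd (by rw [hb] at hθ h1; exact h1.1.trans hθ.symm) h1.2.1
  · have : (c.Sα z \ {c.θ z}).ncard = 1 := by
      rw [Set.ncard_diff_singleton_of_mem hθ, h]
    obtain ⟨b, hb⟩ := Set.ncard_eq_one.1 this
    have e1 : w₁ ∈ c.Sα z \ {c.θ z} := ⟨h1.1, h1.2.1⟩
    have e2 : w₂ ∈ c.Sα z \ {c.θ z} := ⟨h2.1, h2.2.1⟩
    rw [hb] at e1 e2
    exact e1.trans e2.symm
  · obtain ⟨ht, htne, -, -⟩ := c.tilde_spec z hz h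
    have ht' : c.tilde z ∈ c.Sα z \ {c.θ z} := ⟨ht, htne⟩
    have : ((c.Sα z \ {c.θ z}) \ {c.tilde z}).ncard = 1 := by
      rw [Set.ncard_diff_singleton_of_mem ht',
        Set.ncard_diff_singleton_of_mem hθ, h]
    obtain ⟨b, hb⟩ := Set.ncard_eq_one.1 this
    have e1 : w₁ ∈ (c.Sα z \ {c.θ z}) \ {c.tilde z} := ⟨⟨h1.1, h1.2.1⟩, h1.2.2⟩
    have e2 : w₂ ∈ (c.Sα z \ {c.θ z}) \ {c.tilde z} := ⟨⟨h2.1, h2.2.1⟩, h2.2.2⟩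
    rw [hb] at e1 e2
    exact e1.trans e2.symm

def StepRel (x w : M) : Prop :=
  ((c.Sα (c.θ x)).ncard = 1 → w = x) ∧
  (2 ≤ (c.Sα (c.θ x)).ncard → w ∈ c.Sα (c.θ x) \ {x, c.tilde (c.θ x)})

lemma isSeq_stepRel {α : M} {a : ℕ → M} (ha : c.IsSeq α a) (n : ℕ) :
    c.StepRel (a n) (a (n + 1)) := ha.2.2 n

lemma step_unique {x w₁ w₂ : M} (hx : x ∈ c.O) (h1 : c.StepRel x w₁) (h2 : c.StepRel x w₂) :
    w₁ = w₂ := by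
  have hy : c.θ x ∈ c.O := c.θ_mem x hx
  obtain ⟨hc1, hc3⟩ := c.card₁₂₃ (c.θ x) hy
  rcases eq_or_lt_of_le hc1 with h | h
  · rw [h1.1 h.symm, h2.1 h.symm]
  · have h2le : 2 ≤ (c.Sα (c.θ x)).ncard := h
    have e : ({x, c.tilde (c.θ x)} : Set M) = {c.θ (c.θ x), c.tilde (c.θ x)} := by
      rw [c.θ_invol x hx]
    have m1 := h1.2 h2le
    have m2 := h2.2 h2le
    rw [e] at m1 m2
    exact c.residual_unique hy m1 m2

lemma moving_step {α : M} {a : ℕ → M} (ha : c.IsSeq α a) {n : ℕ} (h : a (n + 1) ≠ a n) :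
    2 ≤ (c.Sα (c.θ (a n))).ncard ∧
      a (n + 1) ∈ c.Sα (c.θ (a n)) \ {a n, c.tilde (c.θ (a n))} := by
  have hθ : c.θ (a n) ∈ c.O := c.θ_mem _ (ha.2.1 n)
  obtain ⟨hc1, hc3⟩ := c.card₁₂₃ _ hθ
  rcases eq_or_lt_of_le hc1 with hc | hc
  · exact absurd ((ha.2.2 n).1 hc.symm) h
  · exact ⟨hc, (ha.2.2 n).2 hc⟩

lemma succ_two_le {α : M} {a : ℕ → M} (ha : c.IsSeq α a) {n : ℕ} (h : a (n + 1) ≠ a n) :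
    2 ≤ (c.Sα (a (n + 1))).ncard := by
  have hmem := ha.2.1
  have hθn : c.θ (a n) ∈ c.O := c.θ_mem _ (hmem n)
  obtain ⟨-, hstep⟩ := c.moving_step ha h
  have h1 : c.θ (a n) ∈ c.Sα (a (n + 1)) := c.Sα_symm _ hθn _ hstep.1
  have h2 : c.θ (a (n + 1)) ∈ c.Sα (a (n + 1)) := c.θ_in_Sα _ (hmem (n + 1))
  exact c.two_le_ncard (hmem (n + 1)) h1 h2
    (fun he => h (c.theta_inj (hmem n) (hmem (n + 1)) he).symm)

lemma not_theta_tilde {α : M} {a : ℕ → M} (ha : c.IsSeq α a) (hnt : c.NotTildeImage α)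
    (hm : ∀ n, a (n + 1) ≠ a n) {z : M} (hz : z ∈ c.O) (h3 : (c.Sα z).ncard = 3) :
    ∀ k, a k ≠ c.θ (c.tilde z) := by
  intro k
  cases k with
  | zero => rw [ha.1]; exact (hnt z hz h3).2
  | succ n =>
    intro he
    have h1 := c.succ_two_le ha (hm n)
    rw [he, (c.tilde_spec z hz h3).2.2.2] at h1
    omega

/-- Core reversal lemma: a moving step `u → z` whose source is not `θ(tilde z)`
can be reversed. -/
lemma reverse_mem {u z : M} (hu : u ∈ c.O) (hz : z ∈ c.O)
    (hstep : z ∈ c.Sα (c.θ u) \ {u, c.tilde (c.θ u)})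
    (hg : (c.Sα z).ncard = 3 → u ≠ c.θ (c.tilde z)) :
    c.θ u ∈ c.Sα z \ {c.θ z, c.tilde z} ∧ 2 ≤ (c.Sα z).ncard := by
  have hθu : c.θ u ∈ c.O := c.θ_mem u hu
  have hsym : c.θ u ∈ c.Sα z := c.Sα_symm _ hθu z hstep.1
  have hzu : z ≠ u := by
    intro he; exact hstep.2 (Or.inl he)
  have hθne : c.θ u ≠ c.θ z := fun he => hzu (c.theta_inj hu hz he).symm
  have h2le : 2 ≤ (c.Sα z).ncard :=
    c.two_le_ncard hz hsym (c.θ_in_Sα z hz) hθne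
  have htne : c.θ u ≠ c.tilde z := by
    obtain ⟨-, hc3⟩ := c.card₁₂₃ z hz
    rcases eq_or_lt_of_le h2le with hc | hc
    · rw [c.tilde_eq z hz hc.symm]; exact hθne
    · have hc3' : (c.Sα z).ncard = 3 := by omega
      intro he
      exact hg hc3' (by rw [← c.θ_invol u hu, he])
  refine ⟨⟨hsym, ?_⟩, h2le⟩
  simp only [Set.mem_insert_iff, Set.mem_singleton_iff, not_or]
  exact ⟨hθne, htne⟩

lemma periodic {α : M} {a : ℕ → M} (ha : c.IsSeq α a) {j : ℕ} (hj : a j = a 0) :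
    ∀ n, a (n + j) = a n := by
  intro n
  induction n with
  | zero => simpa using hj
  | succ n ih =>
    have e : n + 1 + j = (n + j) + 1 := by omega
    rw [e]
    have h1 : c.StepRel (a n) (a ((n + j) + 1)) := by
      have := c.isSeq_stepRel ha (n + j); rwa [ih] at this
    exact c.step_unique (ha.2.1 n) h1 (c.isSeq_stepRel ha n)

lemma frozen {α : M} {a : ℕ → M} (ha : c.IsSeq α a) {n : ℕ} (h : a (n + 1) = a n) :
    ∀ k, a (n + k) = a n := by
  have hcard : (c.Sα (c.θ (a n))).ncard = 1 := by
    by_contra hne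
    obtain ⟨hc1, -⟩ := c.card₁₂₃ _ (c.θ_mem _ (ha.2.1 n))
    have h2 : 2 ≤ (c.Sα (c.θ (a n))).ncard := by omega
    have := (ha.2.2 n).2 h2
    simp only [Set.mem_diff, Set.mem_insert_iff, not_or] at this
    exact this.2.1 h
  intro k
  induction k with
  | zero => rfl
  | succ k ih =>
    have e : n + (k + 1) = (n + k) + 1 := by omega
    rw [e, (ha.2.2 (n + k)).1 (by rwa [ih]), ih]

lemma notTildeImage_theta {α : M} (hα : α ∈ c.O) (hnt : c.NotTildeImage α) :
    c.NotTildeImage (c.θ α) := by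
  intro β hβ h3
  obtain ⟨h1, h2⟩ := hnt β hβ h3
  have htm : c.tilde β ∈ c.O := c.Sα_sub β hβ (c.tilde_spec β hβ h3).1
  constructor
  · intro he
    exact h2 (by rw [← c.θ_invol α hα, he])
  · intro he
    apply h1
    rw [← c.θ_invol α hα, he, c.θ_invol _ htm]

/-- the reversal lemma: if `a` never stalls and returns to `α` at time `j`, then the
sequence `a'` started at `θ α` traverses the cycle backwards. -/
lemma reverse_seq {α : M} {a a' : ℕ → M} (hα : α ∈ c.O) (hnt : c.NotTildeImage α)
    (ha : c.IsSeq α a) (ha' : c.IsSeq (c.θ α) a') (hm : ∀ n, a (n + 1) ≠ a n)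
    {j : ℕ} (hj : a j = α) (hj2 : 2 ≤ j) : ∀ i ≤ j, a' i = c.θ (a (j - i)) := by
  intro i hi
  induction i with
  | zero => simp [ha'.1, hj]
  | succ i ih =>
    have hij : i < j := hi
    have ihe : a' i = c.θ (a (j - i)) := ih (by omega)
    set n := j - i - 1 with hn
    have hn1 : n + 1 = j - i := by omega
    have hn2 : j - (i + 1) = n := by omega
    have hmov : a (n + 1) ≠ a n := hm n
    have hmemn := ha.2.1
    obtain ⟨-, hstep⟩ := c.moving_step ha hmov
    have hg : (c.Sα (a (n + 1))).ncard = 3 → a n ≠ c.θ (c.tilde (a (n + 1))) := fun h3 =>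
      c.not_theta_tilde ha hnt hm (hmemn (n + 1)) h3 n
    obtain ⟨hrev, h2le⟩ := c.reverse_mem (hmemn n) (hmemn (n + 1)) hstep hg
    -- now identify a' (i+1) with θ (a n) via step uniqueness
    have hz : c.θ (a' i) = a (n + 1) := by
      rw [ihe, hn1, c.θ_invol _ (hmemn (j - i))]
    have hset : ({a' i, c.tilde (c.θ (a' i))} : Set M) =
        {c.θ (a (n + 1)), c.tilde (a (n + 1))} := by
      rw [hz, ihe, hn1]
    have hsr : c.StepRel (a' i) (c.θ (a n)) := by
      constructor
      · intro h1; rw [hz] at h1; omega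
      · intro _
        rw [hset, hz]
        exact hrev
    have := c.step_unique (ha'.2.1 i) (c.isSeq_stepRel ha' i) hsr
    rw [this, hn2]

/-- Existence of a cycle through `α` for a never-stalling sequence. -/
lemma exists_cycle {α : M} {a : ℕ → M} (hα : α ∈ c.O) (hnt : c.NotTildeImage α)
    (ha : c.IsSeq α a) (hm : ∀ n, a (n + 1) ≠ a n) : ∃ j, 2 ≤ j ∧ a j = α := by
  classical
  have hex : ∃ m, ∃ n, m < n ∧ a m = a n := by
    obtain ⟨m, n, hmn, he⟩ :=
      Set.Finite.exists_lt_map_eq_of_forall_mem (fun n => ha.2.1 n) c.Ofin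
    exact ⟨m, n, hmn, he⟩
  obtain ⟨n, hmn, he⟩ := Nat.find_spec hex
  have hm0 : Nat.find hex = 0 := by
    by_contra hm0
    obtain ⟨m', hm'⟩ : ∃ m', Nat.find hex = m' + 1 := ⟨Nat.find hex - 1, by omega⟩
    rw [hm'] at hmn he
    have hn1 : n - 1 + 1 = n := by omega
    have hmemn := ha.2.1
    -- both a m' and a (n-1) step into z := a (m'+1)
    obtain ⟨-, hs1⟩ := c.moving_step ha (hm m')
    obtain ⟨-, hs2⟩ := c.moving_step ha (hm (n - 1))
    rw [hn1, ← he] at hs2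
    have hg1 : (c.Sα (a (m' + 1))).ncard = 3 → a m' ≠ c.θ (c.tilde (a (m' + 1))) := fun h3 =>
      c.not_theta_tilde ha hnt hm (hmemn (m' + 1)) h3 m'
    have hg2 : (c.Sα (a (m' + 1))).ncard = 3 → a (n - 1) ≠ c.θ (c.tilde (a (m' + 1))) :=
      fun h3 => c.not_theta_tilde ha hnt hm (hmemn (m' + 1)) h3 (n - 1)
    obtain ⟨hr1, -⟩ := c.reverse_mem (hmemn m') (hmemn (m' + 1)) hs1 hg1
    obtain ⟨hr2, -⟩ := c.reverse_mem (hmemn (n - 1)) (hmemn (m' + 1)) hs2 hg2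
    have heq : a m' = a (n - 1) :=
      c.theta_inj (hmemn m') (hmemn (n - 1))
        (c.residual_unique (hmemn (m' + 1)) hr1 hr2)
    have : m' < n - 1 := by omega
    exact Nat.find_min hex (m := m') (by omega) ⟨n - 1, this, heq⟩
  rw [hm0] at he hmn
  have hn2 : 2 ≤ n := by
    by_contra h
    have hn1 : n = 1 := by omega
    rw [hn1] at he
    exact hm 0 he.symm
  exact ⟨n, hn2, by rw [← he, ha.1]⟩

end ChainSetup

/-!
STATEMENT 12: In the same setting, let `α ∈ O` be such that no `β ∈ O₃` satisfies
`α = β̃` or `α = θ(β̃)`, and let `a`, `a'` be the sequences `(α^i)` and `(α^{(i)})`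
constructed from `α` and from `θ(α)`.  If `α` is not a stationary root (i.e. it is not
the case that both sequences are stationary), then there exists an integer `j > 1` with
`α = α^j = θ(α^{(j)})`; that is, every non-stationary such root is cyclic.  Conversely,
if there exists `j > 1` with `α = α^j` and `α ≠ α^{j−1}`, then `α = θ(α^{(j)})` and `α`
is not stationary.
-/
theorem nonstationary_iff_cyclic {M : Type*} [AddCommGroup M] (c : ChainSetup M)
    (α : M) (hα : α ∈ c.O) (hnt : c.NotTildeImage α)
    (a a' : ℕ → M) (ha : c.IsSeq α a) (ha' : c.IsSeq (c.θ α) a') :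
    (¬ (c.Stationary a ∧ c.Stationary a') →
        ∃ j : ℕ, 1 < j ∧ a j = α ∧ c.θ (a' j) = α) ∧
    (∀ j : ℕ, 1 < j → a j = α → a (j - 1) ≠ α →
        c.θ (a' j) = α ∧ ¬ (c.Stationary a ∧ c.Stationary a')) := by
  have hθα : c.θ α ∈ c.O := c.θ_mem α hα
  have hθθ : c.θ (c.θ α) = α := c.θ_invol α hα
  have hnt' : c.NotTildeImage (c.θ α) := c.notTildeImage_theta hα hnt
  have ha'' : c.IsSeq (c.θ (c.θ α)) a := by rwa [hθθ]
  constructor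
  · intro h
    by_cases hs : c.Stationary a
    · have hs' : ¬ c.Stationary a' := fun h' => h ⟨hs, h'⟩
      have hm' : ∀ n, a' (n + 1) ≠ a' n := fun n hn => hs' ⟨n, hn⟩
      obtain ⟨j, hj2, hj⟩ := c.exists_cycle hθα hnt' ha' hm'
      have hrev := c.reverse_seq hθα hnt' ha' ha'' hm' hj hj2 j le_rfl
      rw [Nat.sub_self, ha'.1, hθθ] at hrev
      exact ⟨j, hj2, hrev, by rw [hj, hθθ]⟩
    · have hm : ∀ n, a (n + 1) ≠ a n := fun n hn => hs ⟨n, hn⟩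
      obtain ⟨j, hj2, hj⟩ := c.exists_cycle hα hnt ha hm
      have hrev := c.reverse_seq hα hnt ha ha' hm hj hj2 j le_rfl
      rw [Nat.sub_self, ha.1] at hrev
      exact ⟨j, hj2, hj, by rw [hrev, hθθ]⟩
  · intro j hj1 haj hprev
    have hj2 : 2 ≤ j := hj1
    have hns : ¬ c.Stationary a := by
      rintro ⟨n, hn⟩
      have hper : ∀ k m, a (m + k * j) = a m := by
        intro k
        induction k with
        | zero => simp
        | succ k ih =>
          intro m
          have e : m + (k + 1) * j = (m + k * j) + j := by ring
          rw [e, c.periodic ha (by rw [haj, ha.1]) (m + k * j), ih]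
      have hfro := c.frozen ha hn
      have key : ∀ m, n ≤ m → a m = a n := by
        intro m hm'
        have := hfro (m - n)
        rwa [Nat.add_sub_cancel' hm'] at this
      have hnj : n ≤ n * j := Nat.le_mul_of_pos_right n (by omega)
      have h1 : a (j - 1) = a n := by
        rw [← hper n (j - 1)]
        exact key _ (le_trans hnj (Nat.le_add_left _ _))
      have h2 : a j = a n := by
        rw [← hper n j]
        exact key _ (le_trans hnj (Nat.le_add_left _ _))
      exact hprev (by rw [h1, ← h2, haj])
    have hm : ∀ n, a (n + 1) ≠ a n := fun n hn => hns ⟨n, hn⟩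
    have hrev := c.reverse_seq hα hnt ha ha' hm haj hj2 j le_rfl
    rw [Nat.sub_self, ha.1] at hrev
    exact ⟨by rw [hrev, hθθ], fun h => hns h.1⟩
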